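/- If the DFA sample (Z₊, Z₋) over Σ = V ∪ E, where Z₊ = {ε} ∪ { v_i e_{ij} : {v_i, v_j} ∈ E, i < j } and Z₋ = V ∪ { v_j e_{ij} : {v_i, v_j} ∈ E, i < j }, admits a consistent DFA with at most K+1 states, then the graph G = (V, E) admits a proper K-coloring. -/

import Mathlib

open Sum in
/-- Zhang's reduction, backward direction: if the sample `(Z₊, Z₋)` over the
alphabet `V ∪ E` admits a consistent DFA with at most `K + 1` states, then the
graph admits a proper `K`-coloring. -/
theorem zhang_dfa_to_coloring (n K : ℕ) (G : SimpleGraph (Fin n))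
    (h : ∃ (σ : Type) (_ : Fintype σ) (M : DFA (Fin n ⊕ Sym2 (Fin n)) σ),
      Fintype.card σ ≤ K + 1 ∧
      (∀ w ∈ ({[]} ∪
          {w | ∃ i j, G.Adj i j ∧ i < j ∧ w = [inl i, inr s(i, j)]} :
          Set (List (Fin n ⊕ Sym2 (Fin n)))),
        M.eval w ∈ M.accept) ∧
      (∀ w ∈ ({w | ∃ i : Fin n, w = [inl i]} ∪
          {w | ∃ i j, G.Adj i j ∧ i < j ∧ w = [inl j, inr s(i, j)]} :
          Set (List (Fin n ⊕ Sym2 (Fin n)))),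
        M.eval w ∉ M.accept)) :
    ∃ Φ : Fin n → Fin K, ∀ i j, G.Adj i j → Φ i ≠ Φ j := by
  classical
  obtain ⟨σ, _, M, hcard, hpos, hneg⟩ := h
  -- the initial state is accepting (ε ∈ Z₊)
  have hstart : M.eval [] ∈ M.accept := hpos [] (Or.inl rfl)
  -- state reached after reading vertex i
  set q : Fin n → σ := fun i => M.eval [inl i] with hq
  have hqne : ∀ i, q i ≠ M.eval [] := by
    intro i hEq
    exact hneg [inl i] (Or.inl ⟨i, rfl⟩)
      (by rw [show M.eval [inl i] = q i from rfl, hEq]; exact hstart)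
  -- the states q i avoid the initial state, a set of size ≤ K
  have hsub : Fintype.card {s : σ // s ≠ M.eval []} ≤ K := by
    have h1 : Fintype.card {s : σ // s = M.eval []} = 1 := by
      convert Fintype.card_subtype_eq (M.eval [])
    have h2 : Fintype.card {s : σ // s ≠ M.eval []} = Fintype.card σ - 1 := by
      rw [Fintype.card_subtype_compl, h1]
    omega
  obtain ⟨f⟩ : Nonempty ({s : σ // s ≠ M.eval []} ↪ Fin K) := by
    apply Function.Embedding.nonempty_of_card_le
    simpa using hsub
  refine ⟨fun i => f ⟨q i, hqne i⟩, ?_⟩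
  -- key: adjacent vertices reach distinct states
  have key : ∀ i j, G.Adj i j → i < j → q i ≠ q j := by
    intro i j hadj hij hEq
    have hacc : M.eval [inl i, inr s(i, j)] ∈ M.accept :=
      hpos _ (Or.inr ⟨i, j, hadj, hij, rfl⟩)
    have hrej : M.eval [inl j, inr s(i, j)] ∉ M.accept :=
      hneg _ (Or.inr ⟨i, j, hadj, hij, rfl⟩)
    have e1 : M.eval [inl i, inr s(i, j)] = M.step (q i) (inr s(i, j)) := rfl
    have e2 : M.eval [inl j, inr s(i, j)] = M.step (q j) (inr s(i, j)) := rfl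
    rw [e1, hEq, ← e2] at hacc
    exact hrej hacc
  intro i j hadj hEq
  have hqij : q i ≠ q j := by
    rcases lt_trichotomy i j with hij | hij | hij
    · exact key i j hadj hij
    · exact absurd hij (G.ne_of_adj hadj)
    · exact fun h => key j i hadj.symm hij h.symm
  exact hqij (congrArg Subtype.val (f.injective hEq))
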